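/- The point (1 + 2√2, 1 + √2, 1)/√(13 + 6√2) of the unit sphere corresponds, under a = 1 − x², b = 1 − y², c = 1 − z², to the triangle with side lengths a = (28 + 2√2)/97, b = (82 − 8√2)/97, c = (84 + 6√2)/97; these satisfy 0 < a < b < c < 1 and a + b + c = 2, so this triangle (the least symmetric triangle) is scalene and non-degenerate. -/

import Mathlib

/-- The point (1+2√2, 1+√2, 1)/√(13+6√2) corresponds, under a = 1−x², b = 1−y², c = 1−z²,
to the triangle with side lengths a = (28+2√2)/97, b = (82−8√2)/97, c = (84+6√2)/97,
which satisfy 0 < a < b < c < 1 and a + b + c = 2 (scalene and non-degenerate). -/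
theorem least_symmetric_triangle_side_lengths :
    1 - ((1 + 2 * Real.sqrt 2) / Real.sqrt (13 + 6 * Real.sqrt 2)) ^ 2
        = (28 + 2 * Real.sqrt 2) / 97 ∧
    1 - ((1 + Real.sqrt 2) / Real.sqrt (13 + 6 * Real.sqrt 2)) ^ 2
        = (82 - 8 * Real.sqrt 2) / 97 ∧
    1 - (1 / Real.sqrt (13 + 6 * Real.sqrt 2)) ^ 2
        = (84 + 6 * Real.sqrt 2) / 97 ∧
    (0 : ℝ) < (28 + 2 * Real.sqrt 2) / 97 ∧
    (28 + 2 * Real.sqrt 2) / 97 < (82 - 8 * Real.sqrt 2) / 97 ∧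
    (82 - 8 * Real.sqrt 2) / 97 < (84 + 6 * Real.sqrt 2) / 97 ∧
    (84 + 6 * Real.sqrt 2) / 97 < 1 ∧
    (28 + 2 * Real.sqrt 2) / 97 + (82 - 8 * Real.sqrt 2) / 97
        + (84 + 6 * Real.sqrt 2) / 97 = 2 := by
  have hs0 : (0:ℝ) ≤ 2 := by norm_num
  have h2 : Real.sqrt 2 ^ 2 = 2 := Real.sq_sqrt hs0
  have hsnn : (0:ℝ) ≤ Real.sqrt 2 := Real.sqrt_nonneg 2
  have hslt : Real.sqrt 2 < 3/2 := by nlinarith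
  have hsgt : 1 < Real.sqrt 2 := by nlinarith
  have hdpos : (0:ℝ) < 13 + 6 * Real.sqrt 2 := by nlinarith
  have hd : Real.sqrt (13 + 6 * Real.sqrt 2) ^ 2 = 13 + 6 * Real.sqrt 2 :=
    Real.sq_sqrt hdpos.le
  have hdne : Real.sqrt (13 + 6 * Real.sqrt 2) ≠ 0 := by
    positivity
  refine ⟨?_, ?_, ?_, ?_, ?_, ?_, ?_, ?_⟩
  · field_simp
    nlinarith [hd, h2, Real.sq_sqrt (show (0:ℝ) ≤ 13 + Real.sqrt 2 * 6 by nlinarith),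
      congrArg (fun t => t * Real.sqrt 2) (Real.sq_sqrt (show (0:ℝ) ≤ 13 + Real.sqrt 2 * 6 by nlinarith))]
  · field_simp
    nlinarith [hd, h2, Real.sq_sqrt (show (0:ℝ) ≤ 13 + Real.sqrt 2 * 6 by nlinarith),
      congrArg (fun t => t * Real.sqrt 2) (Real.sq_sqrt (show (0:ℝ) ≤ 13 + Real.sqrt 2 * 6 by nlinarith))]
  · field_simp
    nlinarith [hd, h2]
  · positivity
  · nlinarith
  · nlinarith
  · nlinarith
  · ring
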